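/- Let H be a 3-uniform hypergraph with no linear cycle, and suppose there exist distinct vertices u, v such that uvx ∈ E(H) for all x ∈ V(H) \ {u,v}. Suppose xyu ∈ E(H) with x, y ∈ V(H) \ {u,v}, and xab ∈ E(H) with a, b ∈ V(H) \ {u,v,x}. If |V(H)| ≥ 6, then y ∈ {a,b}. -/
import Mathlib


/-- A linear cycle of length `k ≥ 3` in a 3-uniform hypergraph with edge set `E`:
an alternating cyclic sequence of distinct vertices `v i` and distinct hyperedges `h i`
with `h i ∩ h (i+1) = {v (i+1)}` and non-consecutive hyperedges disjoint. -/
def IsLinearCycle {V : Type*} [DecidableEq V] (E : Finset (Finset V)) (k : ℕ)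
    (v : ZMod k → V) (h : ZMod k → Finset V) : Prop :=
  3 ≤ k ∧ Function.Injective v ∧ Function.Injective h ∧
    (∀ i, h i ∈ E) ∧ (∀ i, h i ∩ h (i + 1) = {v (i + 1)}) ∧
    (∀ i j, i ≠ j → i + 1 ≠ j → j + 1 ≠ i → h i ∩ h j = ∅)

/-- `E` contains a linear cycle. -/
def HasLinearCycle {V : Type*} [DecidableEq V] (E : Finset (Finset V)) : Prop :=
  ∃ (k : ℕ) (v : ZMod k → V) (h : ZMod k → Finset V), IsLinearCycle E k v h

/-- The degree of a vertex: the number of hyperedges containing it. -/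
def hDegree {V : Type*} [DecidableEq V] (E : Finset (Finset V)) (v : V) : ℕ :=
  (E.filter (fun e => v ∈ e)).card

/-- The support of a vertex `v` in a hyperedge `h`: the pairs of `h` that form a
hyperedge together with `v`. -/
def hSupport {V : Type*} [DecidableEq V] (E : Finset (Finset V)) (h : Finset V) (v : V) :
    Finset (Finset V) :=
  (h.powersetCard 2).filter (fun p => insert v p ∈ E)

/-- A pair of vertices is thick if at least two hyperedges contain it. -/
def ThickPair {V : Type*} [DecidableEq V] (E : Finset (Finset V)) (a b : V) : Prop :=
  2 ≤ (E.filter (fun e => a ∈ e ∧ b ∈ e)).card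

/-- A hyperedge is thick if each of its pairs is contained in at least two hyperedges. -/
def ThickEdge {V : Type*} [DecidableEq V] (E : Finset (Finset V)) (h : Finset V) : Prop :=
  ∀ p ∈ h.powersetCard 2, 2 ≤ (E.filter (fun e => p ⊆ e)).card

/-- `v ∉ h` is strongly associated to the hyperedge `h` if at least two of the 3-sets
formed by `v` and a pair of `h` are hyperedges. -/
def StronglyAssoc {V : Type*} [DecidableEq V] (E : Finset (Finset V)) (h : Finset V) (v : V) :
    Prop :=
  v ∉ h ∧ 2 ≤ (hSupport E h v).card

/-- A linear path of length `k` (given by its sequence of hyperedges): consecutive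
hyperedges meet in exactly one vertex, non-consecutive ones are disjoint. -/
def IsLinearPath {V : Type*} [DecidableEq V] (E : Finset (Finset V)) (k : ℕ)
    (h : Fin k → Finset V) : Prop :=
  Function.Injective h ∧ (∀ i, h i ∈ E) ∧
    (∀ i j : Fin k, (i : ℕ) + 1 = (j : ℕ) → (h i ∩ h j).card = 1) ∧
    (∀ i j : Fin k, (i : ℕ) + 2 ≤ (j : ℕ) → h i ∩ h j = ∅)

/-- A linear tree with vertex set `S` and edge set `T`: built from a single vertex by
repeatedly adding hyperedges meeting the current vertex set in exactly one vertex. -/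
inductive IsLinearTree {V : Type*} [DecidableEq V] : Finset V → Finset (Finset V) → Prop
  | single (v : V) : IsLinearTree {v} ∅
  | extend {S : Finset V} {T : Finset (Finset V)} (e : Finset V) :
      IsLinearTree S T → e.card = 3 → (e ∩ S).card = 1 → IsLinearTree (S ∪ e) (insert e T)

/-- Claim about hypergraphs with a "universal pair" `u, v`: if `xyu ∈ E` and
`xab ∈ E` with `a, b ∉ {u,v,x}`, then `y ∈ {a, b}`. -/
theorem y_in_ab {V : Type*} [Fintype V] [DecidableEq V] (E : Finset (Finset V))
    (h3 : ∀ e ∈ E, e.card = 3) (hcyc : ¬ HasLinearCycle E) (u v : V) (huv : u ≠ v)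
    (huniv : ∀ x : V, x ≠ u → x ≠ v → ({u, v, x} : Finset V) ∈ E)
    (x y : V) (hx : x ≠ u ∧ x ≠ v) (hy : y ≠ u ∧ y ≠ v) (hxy : x ≠ y)
    (hxyu : ({x, y, u} : Finset V) ∈ E)
    (a b : V) (hab : a ≠ b) (ha : a ≠ u ∧ a ≠ v ∧ a ≠ x) (hb : b ≠ u ∧ b ≠ v ∧ b ≠ x)
    (hxab : ({x, a, b} : Finset V) ∈ E) (hn : 6 ≤ Fintype.card V) :
    y = a ∨ y = b := by
  by_contra hcon
  push_neg at hcon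
  obtain ⟨hya, hyb⟩ := hcon
  obtain ⟨hxu, hxv⟩ := hx
  obtain ⟨hyu, hyv⟩ := hy
  obtain ⟨hau, hav, hax⟩ := ha
  obtain ⟨hbu, hbv, hbx⟩ := hb
  have e01 : ({x, y, u} : Finset V) ∩ {x, a, b} = {x} := by
    ext w
    simp only [Finset.mem_inter, Finset.mem_insert, Finset.mem_singleton]
    constructor
    · rintro ⟨(rfl | rfl | rfl), (h | h | h)⟩ <;> simp_all
    · rintro rfl; exact ⟨Or.inl rfl, Or.inl rfl⟩
  have e12 : ({x, a, b} : Finset V) ∩ {u, v, a} = {a} := by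
    ext w
    simp only [Finset.mem_inter, Finset.mem_insert, Finset.mem_singleton]
    constructor
    · rintro ⟨(rfl | rfl | rfl), (h | h | h)⟩ <;> simp_all
    · rintro rfl; exact ⟨Or.inr (Or.inl rfl), Or.inr (Or.inr rfl)⟩
  have e20 : ({u, v, a} : Finset V) ∩ {x, y, u} = {u} := by
    ext w
    simp only [Finset.mem_inter, Finset.mem_insert, Finset.mem_singleton]
    constructor
    · rintro ⟨(rfl | rfl | rfl), (h | h | h)⟩ <;> simp_all
    · rintro rfl; exact ⟨Or.inl rfl, Or.inr (Or.inr rfl)⟩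
  have ne01 : ({x, y, u} : Finset V) ≠ {x, a, b} := by
    intro h
    have hm : y ∈ ({x, a, b} : Finset V) := h ▸ (by simp)
    simp only [Finset.mem_insert, Finset.mem_singleton] at hm
    rcases hm with h' | h' | h' <;> simp_all
  have ne02 : ({x, y, u} : Finset V) ≠ {u, v, a} := by
    intro h
    have hm : y ∈ ({u, v, a} : Finset V) := h ▸ (by simp)
    simp only [Finset.mem_insert, Finset.mem_singleton] at hm
    rcases hm with h' | h' | h' <;> simp_all
  have ne12 : ({x, a, b} : Finset V) ≠ {u, v, a} := by
    intro h
    have hm : b ∈ ({u, v, a} : Finset V) := h ▸ (by simp)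
    simp only [Finset.mem_insert, Finset.mem_singleton] at hm
    rcases hm with h' | h' | h' <;> simp_all
  apply hcyc
  refine ⟨3, fun i => if i = 0 then u else if i = 1 then x else a,
    fun i => if i = 0 then ({x, y, u} : Finset V) else if i = 1 then {x, a, b} else {u, v, a},
    le_refl 3, ?_, ?_, ?_, ?_, ?_⟩
  · intro i j hij
    fin_cases i <;> fin_cases j
    · rfl
    · exact absurd hij.symm hxu
    · exact absurd hij.symm hau
    · exact absurd hij hxu
    · rfl
    · exact absurd hij.symm hax
    · exact absurd hij hau
    · exact absurd hij hax
    · rfl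
  · intro i j hij
    fin_cases i <;> fin_cases j
    · rfl
    · exact absurd hij ne01
    · exact absurd hij ne02
    · exact absurd hij.symm ne01
    · rfl
    · exact absurd hij ne12
    · exact absurd hij.symm ne02
    · exact absurd hij.symm ne12
    · rfl
  · intro i
    fin_cases i
    · exact hxyu
    · exact hxab
    · exact huniv a hau hav
  · intro i
    fin_cases i
    · exact e01
    · exact e12
    · exact e20
  · intro i j h1 h2 h3
    exfalso
    fin_cases i <;> fin_cases j <;>
      first | exact h1 rfl | exact h2 rfl | exact h3 rfl
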